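/- Let C ⊊ 𝔽₂ⁿ be a binary code such that C ∩ (C^{⋆2})^⊥ ≠ {0} and such that for every nonzero x ∈ C ∩ (C^{⋆2})^⊥ one has C⋆span{x} = C^⊥. Then either (C^{⋆2})^⊥ = span{y} for some y ∈ C, or C = C^⊥ and C^{⋆2} = span{𝟙}^⊥, where 𝟙 is the all-ones vector. -/

import Mathlib

open Finset

/-- The Euclidean dual of a binary code. -/
def dualCode {n : ℕ} (C : Submodule (ZMod 2) (Fin n → ZMod 2)) :
    Submodule (ZMod 2) (Fin n → ZMod 2) where
  carrier := {x | ∀ c ∈ C, ∑ i, x i * c i = 0}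
  add_mem' := by
    intro a b ha hb
    intro c hc
    have : ∑ i, (a + b) i * c i = ∑ i, (a i * c i + b i * c i) := by
      apply Finset.sum_congr rfl
      intro i _
      simp [add_mul]
    rw [this, Finset.sum_add_distrib, ha c hc, hb c hc, add_zero]
  zero_mem' := by
    intro c hc
    simp
  smul_mem' := by
    intro r a ha
    intro c hc
    have : ∑ i, (r • a) i * c i = r * ∑ i, a i * c i := by
      rw [Finset.mul_sum]
      apply Finset.sum_congr rfl
      intro i _
      simp [mul_assoc]
    rw [this, ha c hc, mul_zero]

/-- The (componentwise) Schur product of two binary codes. -/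
def schur {n : ℕ} (C D : Submodule (ZMod 2) (Fin n → ZMod 2)) :
    Submodule (ZMod 2) (Fin n → ZMod 2) :=
  Submodule.span (ZMod 2) {x | ∃ c ∈ C, ∃ d ∈ D, x = c * d}

/-- A pair of binary codes `(C₁, C₂)` is a CSS-T pair if `C₂ ⊆ C₁ ∩ (C₁^{⋆2})^⊥`. -/
def IsCSST {n : ℕ} (C₁ C₂ : Submodule (ZMod 2) (Fin n → ZMod 2)) : Prop :=
  C₂ ≤ C₁ ⊓ dualCode (schur C₁ C₁)


noncomputable def stdB (n : ℕ) : LinearMap.BilinForm (ZMod 2) (Fin n → ZMod 2) :=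
  LinearMap.mk₂ (ZMod 2) (fun x y => ∑ i, x i * y i)
    (by intro x y z; simp [add_mul, Finset.sum_add_distrib])
    (by intro a x y; simp [Finset.mul_sum, mul_assoc])
    (by intro x y z; simp [mul_add, Finset.sum_add_distrib])
    (by intro a x y; simp [Finset.mul_sum]; congr 1; funext i; ring)

lemma stdB_apply {n : ℕ} (x y : Fin n → ZMod 2) : stdB n x y = ∑ i, x i * y i := rfl

lemma stdB_refl (n : ℕ) : (stdB n).IsRefl := by
  intro x y h
  rw [stdB_apply] at *
  rw [← h]
  exact Finset.sum_congr rfl fun i _ => mul_comm _ _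

lemma stdB_nondeg (n : ℕ) : (stdB n).Nondegenerate := by
  refine (LinearMap.IsRefl.nondegenerate_iff_separatingLeft (stdB_refl n)).mpr ?_
  intro x h
  funext j
  have := h (Pi.single j 1)
  rw [stdB_apply] at this
  simpa [Pi.single_apply, mul_ite, Finset.sum_ite_eq'] using this
lemma dualCode_eq_orthogonal {n : ℕ} (C : Submodule (ZMod 2) (Fin n → ZMod 2)) :
    dualCode C = (stdB n).orthogonal C := by
  ext x
  constructor
  · intro hx c hc
    rw [stdB_apply, ← hx c hc]
    exact Finset.sum_congr rfl fun i _ => mul_comm _ _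
  · intro hx c hc
    have := hx c hc
    rw [stdB_apply] at this
    rw [← this]
    exact Finset.sum_congr rfl fun i _ => mul_comm _ _

lemma dualCode_dualCode {n : ℕ} (C : Submodule (ZMod 2) (Fin n → ZMod 2)) :
    dualCode (dualCode C) = C := by
  rw [dualCode_eq_orthogonal, dualCode_eq_orthogonal]
  exact LinearMap.BilinForm.orthogonal_orthogonal (stdB_nondeg n) (stdB_refl n) C

lemma dualCode_antitone {n : ℕ} {A B : Submodule (ZMod 2) (Fin n → ZMod 2)}
    (h : A ≤ B) : dualCode B ≤ dualCode A := fun _ hz c hc => hz c (h hc)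

lemma schur_mono_right {n : ℕ} (C : Submodule (ZMod 2) (Fin n → ZMod 2))
    {A B : Submodule (ZMod 2) (Fin n → ZMod 2)} (h : A ≤ B) :
    schur C A ≤ schur C B := by
  apply Submodule.span_mono
  rintro x ⟨c, hc, d, hd, rfl⟩
  exact ⟨c, hc, d, h hd, rfl⟩

lemma schur_vanish {n : ℕ} (C : Submodule (ZMod 2) (Fin n → ZMod 2))
    (w : Fin n → ZMod 2) (i : Fin n) (hw : w i = 0) :
    ∀ v ∈ schur C (Submodule.span (ZMod 2) {w}), v i = 0 := by
  have hle : schur C (Submodule.span (ZMod 2) {w}) ≤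
      LinearMap.ker (LinearMap.proj (R := ZMod 2) (φ := fun _ : Fin n => ZMod 2) i) := by
    apply Submodule.span_le.2
    rintro x ⟨c, _, d, hd, rfl⟩
    rcases Submodule.mem_span_singleton.1 hd with ⟨a, rfl⟩
    simp [hw]
  intro v hv
  exact hle hv

theorem stmt_14 (n : ℕ) (C : Submodule (ZMod 2) (Fin n → ZMod 2))
    (hC : C ≠ ⊤) (hne : C ⊓ dualCode (schur C C) ≠ ⊥)
    (hx : ∀ x ∈ C ⊓ dualCode (schur C C), x ≠ 0 →
      schur C (Submodule.span (ZMod 2) {x}) = dualCode C) :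
    (∃ y ∈ C, dualCode (schur C C) = Submodule.span (ZMod 2) {y}) ∨
      (C = dualCode C ∧
        schur C C = dualCode (Submodule.span (ZMod 2) {(1 : Fin n → ZMod 2)})) := by
  obtain ⟨x, hxCD, hx0⟩ := Submodule.exists_mem_ne_zero_of_ne_bot hne
  obtain ⟨hxC, hxD⟩ := Submodule.mem_inf.1 hxCD
  left
  refine ⟨x, hxC, ?_⟩
  have hsq : ∀ a : ZMod 2, a * a = a := by decide
  have hone : ∀ a : ZMod 2, a ≠ 0 → a = 1 := by decide
  -- x = x*x ∈ schur C span{x}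
  have hmem : ∀ w : Fin n → ZMod 2, w ∈ C → w ∈ schur C (Submodule.span (ZMod 2) {w}) := by
    intro w hw
    have : w * w ∈ schur C (Submodule.span (ZMod 2) {w}) :=
      Submodule.subset_span ⟨w, hw, w, Submodule.mem_span_singleton_self w, rfl⟩
    have hww : w * w = w := by funext i; exact hsq (w i)
    rwa [hww] at this
  have h1 := hx x hxCD hx0
  have hxdual : x ∈ dualCode C := h1 ▸ hmem x hxC
  -- dualCode C ≤ schur C C
  have hCle : dualCode C ≤ schur C C := by
    rw [← h1]
    exact schur_mono_right C (Submodule.span_le.2 (by simpa using hxC))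
  have hDleC : dualCode (schur C C) ≤ C := by
    have := dualCode_antitone hCle
    rwa [dualCode_dualCode] at this
  apply le_antisymm
  · intro z hz
    by_contra hz'
    have hz0 : z ≠ 0 := by
      rintro rfl; exact hz' (Submodule.zero_mem _)
    have hzC : z ∈ C := hDleC hz
    have hz1 := hx z (Submodule.mem_inf.2 ⟨hzC, hz⟩) hz0
    have hxz0 : x + z ≠ 0 := by
      intro h
      have : z = -x := eq_neg_of_add_eq_zero_right h
      exact hz' (this ▸ Submodule.neg_mem _ (Submodule.mem_span_singleton_self x))
    have hxzCD : x + z ∈ C ⊓ dualCode (schur C C) :=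
      Submodule.add_mem _ hxCD (Submodule.mem_inf.2 ⟨hzC, hz⟩)
    have hz2 := hx (x + z) hxzCD hxz0
    -- x ∈ schur C span{z} and x ∈ schur C span{x+z}
    have hxz : x ∈ schur C (Submodule.span (ZMod 2) {z}) := hz1 ▸ hxdual
    have hxxz : x ∈ schur C (Submodule.span (ZMod 2) {x + z}) := hz2 ▸ hxdual
    obtain ⟨i, hi⟩ := Function.ne_iff.1 hx0
    simp only [Pi.zero_apply] at hi
    have hzi : z i ≠ 0 := fun h => hi (schur_vanish C z i h x hxz)
    have hxzi : (x + z) i = 0 := by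
      have := hone _ hi
      have := hone _ hzi
      simp only [Pi.add_apply]
      rw [hone _ hi, hone _ hzi]
      decide
    exact hi (schur_vanish C (x + z) i hxzi x hxxz)
  · rw [Submodule.span_le]
    simpa using hxD
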